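/- Let k be a positive integer and let B be the real 4×4 matrix with rows (0, √k, 0, 0), (√k, 0, 1, 0), (0, 1, 0, √k), (0, 0, √k, 0). Then the characteristic polynomial of B equals (x² − x − k)(x² + x − k); equivalently, the eigenvalues of B are α, −α, α−1 and 1−α, where α = (1+√(1+4k))/2. -/

import Mathlib

open Matrix Polynomial

noncomputable section

lemma mem_spectrum_iff_eval_charpoly {n : Type*} [Fintype n] [DecidableEq n]
    (M : Matrix n n ℝ) (μ : ℝ) :
    μ ∈ spectrum ℝ M ↔ M.charpoly.eval μ = 0 := by
  rw [spectrum.mem_iff, Matrix.isUnit_iff_isUnit_det, isUnit_iff_ne_zero, not_not,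
    Matrix.charpoly, _root_.eval_det, matPolyEquiv_charmatrix]
  simp [Matrix.algebraMap_eq_diagonal, Matrix.scalar]

set_option maxHeartbeats 1000000 in
/-- the characteristic polynomial of the symmetrized quotient matrix of
`S_{k,k}` is `(x² − x − k)(x² + x − k)`; equivalently its eigenvalues are
`α, −α, α−1, 1−α` with `α = (1+√(1+4k))/2`. -/
theorem charpoly_Skk_quotient (k : ℕ) (hk : 0 < k)
    (B : Matrix (Fin 4) (Fin 4) ℝ)
    (hB : B = !![0, Real.sqrt k, 0, 0;
                 Real.sqrt k, 0, 1, 0;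
                 0, 1, 0, Real.sqrt k;
                 0, 0, Real.sqrt k, 0])
    (α : ℝ) (hα : α = (1 + Real.sqrt (1 + 4 * k)) / 2) :
    B.charpoly = (X ^ 2 - X - C (k : ℝ)) * (X ^ 2 + X - C (k : ℝ)) ∧
    spectrum ℝ B = {α, -α, α - 1, 1 - α} := by
  have hs : Real.sqrt k * Real.sqrt k = (k : ℝ) := Real.mul_self_sqrt (by positivity)
  have hcp : B.charpoly = (X ^ 2 - X - C (k : ℝ)) * (X ^ 2 + X - C (k : ℝ)) := by
    have hcm : B.charmatrix = !![X, -C (Real.sqrt k), 0, 0;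
        -C (Real.sqrt k), X, -1, 0;
        0, -1, X, -C (Real.sqrt k);
        0, 0, -C (Real.sqrt k), X] := by
      subst hB
      refine Matrix.ext fun i j => ?_
      fin_cases i <;> fin_cases j <;>
        simp [charmatrix_apply, Matrix.diagonal, Matrix.one_apply, Matrix.vecHead,
          Matrix.vecTail, Function.comp]
    rw [Matrix.charpoly, hcm]
    simp [Matrix.det_succ_row_zero, Fin.sum_univ_succ, Fin.succAbove]
    have hCk : (C (k : ℝ)) = C (Real.sqrt k) * C (Real.sqrt k) := by
      rw [← C_mul, hs]
    rw [map_natCast] at hCk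
    rw [hCk]
    ring
  refine ⟨hcp, ?_⟩
  -- α² = α + k
  have h14 : Real.sqrt (1 + 4 * k) * Real.sqrt (1 + 4 * k) = 1 + 4 * k :=
    Real.mul_self_sqrt (by positivity)
  have hα2 : α ^ 2 = α + k := by
    rw [hα]; field_simp; nlinarith [h14]
  ext μ
  rw [mem_spectrum_iff_eval_charpoly, hcp]
  have hfac : ((X ^ 2 - X - C (k : ℝ)) * (X ^ 2 + X - C (k : ℝ))).eval μ =
      (μ - α) * (μ - (1 - α)) * ((μ - (-α)) * (μ - (α - 1))) := by
    simp only [eval_mul, eval_sub, eval_add, eval_pow, eval_X, eval_C]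
    nlinarith [hα2, sq_nonneg μ]
  rw [hfac]
  simp only [Set.mem_insert_iff, Set.mem_singleton_iff, mul_eq_zero, sub_eq_zero]
  constructor
  · rintro ((h | h) | (h | h)) <;> simp [h]
  · rintro (h | h | h | h) <;> simp [h]
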